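/- Let P be a symmetric idempotent real n×n matrix with P ≠ 0 and P ≠ I, M a symmetric positive definite real n×n matrix, and for μ > 0 set M̄(μ) = P M P + μ (I − P). Let a = inf of the nonzero eigenvalues of P M P and b = sup of the eigenvalues of P M P. If a ≤ μ ≤ b, then for every μ' > 0 the condition number of M̄(μ) is at most that of M̄(μ'); equivalently, (sup spectrum M̄(μ)) · (inf spectrum M̄(μ')) ≤ (sup spectrum M̄(μ')) · (inf spectrum M̄(μ)). -/

import Mathlib

open Matrix

/-- Membership in the spectrum of a real matrix via eigenvectors. -/
lemma aux_mem_spec_iff {n : ℕ} (A : Matrix (Fin n) (Fin n) ℝ) (x : ℝ) :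
    x ∈ spectrum ℝ A ↔ ∃ v : Fin n → ℝ, v ≠ 0 ∧ A *ᵥ v = x • v := by
  rw [spectrum.mem_iff, Matrix.isUnit_iff_isUnit_det, isUnit_iff_ne_zero, not_ne_iff,
    ← Matrix.exists_mulVec_eq_zero_iff]
  constructor
  · rintro ⟨v, hv, hev⟩
    refine ⟨v, hv, ?_⟩
    have : (algebraMap ℝ (Matrix (Fin n) (Fin n) ℝ) x) *ᵥ v - A *ᵥ v = 0 := by
      rw [← Matrix.sub_mulVec]; exact hev
    have h2 : (algebraMap ℝ (Matrix (Fin n) (Fin n) ℝ) x) *ᵥ v = x • v := by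
      rw [Algebra.algebraMap_eq_smul_one, Matrix.smul_mulVec, Matrix.one_mulVec]
    rw [h2, sub_eq_zero] at this
    exact this.symm
  · rintro ⟨v, hv, hev⟩
    refine ⟨v, hv, ?_⟩
    rw [Matrix.sub_mulVec, Algebra.algebraMap_eq_smul_one, Matrix.smul_mulVec,
      Matrix.one_mulVec, hev, sub_self]

section Aux

variable {n : ℕ} (P M : Matrix (Fin n) (Fin n) ℝ)

/-- Any nonzero element of the spectrum of `P M P` is positive, with an eigenvector
fixed by `P`. -/
lemma aux_spec_pos (hPsymm : Pᵀ = P) (hPidem : P * P = P) (hM : M.PosDef) {x : ℝ}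
    (hx : x ∈ spectrum ℝ (P * M * P) \ {0}) : 0 < x := by
  obtain ⟨hx, hx0⟩ := hx
  rw [Set.mem_singleton_iff] at hx0
  obtain ⟨v, hv, hev⟩ := (aux_mem_spec_iff _ _).mp hx
  -- P fixes v
  have hPA : P * (P * M * P) = P * M * P := by
    rw [show P * (P * M * P) = P * P * M * P by noncomm_ring, hPidem]
  have hPv : P *ᵥ v = v := by
    have h1 : P *ᵥ ((P * M * P) *ᵥ v) = P *ᵥ (x • v) := by rw [hev]
    rw [Matrix.mulVec_mulVec, hPA, hev, Matrix.mulVec_smul] at h1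
    have := smul_right_injective (Fin n → ℝ) hx0 h1
    exact this.symm
  -- x * (v ⬝ᵥ v) = v ⬝ᵥ M v > 0
  have hvPv : v ᵥ* P = v := by
    rw [← Matrix.mulVec_transpose, hPsymm, hPv]
  have key : x * (v ⬝ᵥ v) = v ⬝ᵥ (M *ᵥ v) := by
    have : v ⬝ᵥ ((P * M * P) *ᵥ v) = v ⬝ᵥ (x • v) := by rw [hev]
    rw [dotProduct_smul, smul_eq_mul] at this
    rw [← this]
    rw [show (P * M * P) *ᵥ v = P *ᵥ (M *ᵥ (P *ᵥ v)) by
      rw [Matrix.mulVec_mulVec, Matrix.mulVec_mulVec]]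
    rw [hPv, Matrix.dotProduct_mulVec v P, hvPv]
  have hMv : 0 < v ⬝ᵥ (M *ᵥ v) := by
    have := hM.dotProduct_mulVec_pos hv
    simpa using this
  have hvv : 0 < v ⬝ᵥ v := by
    have h := Matrix.dotProduct_star_self_pos_iff (v := v) |>.mpr hv
    simpa using h
  nlinarith [key, hMv, hvv]

/-- The spectrum of `P M P + t (1 - P)` for `t > 0`. -/
lemma aux_spec_eq (hPsymm : Pᵀ = P) (hPidem : P * P = P) (hPne : P ≠ 1) (hM : M.PosDef)
    {t : ℝ} (ht : 0 < t) :
    spectrum ℝ (P * M * P + t • ((1 : Matrix (Fin n) (Fin n) ℝ) - P)) =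
      (spectrum ℝ (P * M * P) \ {0}) ∪ {t} := by
  set A := P * M * P with hA
  set Q : Matrix (Fin n) (Fin n) ℝ := 1 - P with hQ
  have hPQ : P * Q = 0 := by rw [hQ, mul_sub, mul_one, hPidem, sub_self]
  have hQP : Q * P = 0 := by rw [hQ, sub_mul, one_mul, hPidem, sub_self]
  have hQQ : Q * Q = Q := by rw [hQ]; noncomm_ring [hPidem]
  have hPA : P * A = A := by
    rw [hA, show P * (P * M * P) = P * P * M * P by noncomm_ring, hPidem]
  have hQA : Q * A = 0 := by
    rw [hA, show Q * (P * M * P) = Q * P * (M * P) by noncomm_ring, hQP, zero_mul]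
  have hAQ : A * Q = 0 := by
    rw [hA, show P * M * P * Q = P * M * (P * Q) by noncomm_ring, hPQ, mul_zero]
  ext x
  simp only [Set.mem_union, Set.mem_diff, Set.mem_singleton_iff]
  constructor
  · intro hx
    obtain ⟨v, hv, hev⟩ := (aux_mem_spec_iff _ _).mp hx
    have key1 : A *ᵥ v = x • (P *ᵥ v) := by
      have h1 : P *ᵥ ((A + t • Q) *ᵥ v) = P *ᵥ (x • v) := by rw [hev]
      rw [Matrix.mulVec_mulVec, mul_add, mul_smul_comm, hPA, hPQ, smul_zero, add_zero,
        Matrix.mulVec_smul] at h1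
      exact h1
    have key2 : t • (Q *ᵥ v) = x • (Q *ᵥ v) := by
      have h1 : Q *ᵥ ((A + t • Q) *ᵥ v) = Q *ᵥ (x • v) := by rw [hev]
      rw [Matrix.mulVec_mulVec, mul_add, mul_smul_comm, hQA, hQQ, zero_add,
        Matrix.smul_mulVec, Matrix.mulVec_smul] at h1
      exact h1
    by_cases hQv : Q *ᵥ v = 0
    · left
      have hPv : P *ᵥ v = v := by
        rw [hQ, Matrix.sub_mulVec, Matrix.one_mulVec] at hQv
        exact (sub_eq_zero.mp hQv).symm
      have hAv : A *ᵥ v = x • v := by rw [key1, hPv]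
      have hxs : x ∈ spectrum ℝ A := (aux_mem_spec_iff _ _).mpr ⟨v, hv, hAv⟩
      refine ⟨hxs, ?_⟩
      intro hx0
      subst hx0
      rw [zero_smul] at hAv
      have : v ⬝ᵥ (A *ᵥ v) = 0 := by rw [hAv, dotProduct_zero]
      have hvPv : v ᵥ* P = v := by
        rw [← Matrix.mulVec_transpose, hPsymm, hPv]
      rw [hA, show (P * M * P) *ᵥ v = P *ᵥ (M *ᵥ (P *ᵥ v)) by
        rw [Matrix.mulVec_mulVec, Matrix.mulVec_mulVec], hPv,
        Matrix.dotProduct_mulVec v P, hvPv] at this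
      have hMv : 0 < v ⬝ᵥ (M *ᵥ v) := by simpa using hM.dotProduct_mulVec_pos hv
      linarith
    · right
      have : (t - x) • (Q *ᵥ v) = 0 := by
        rw [sub_smul, key2, sub_self]
      rcases smul_eq_zero.mp this with h | h
      · linarith [sub_eq_zero.mp (by linarith [h] : t - x = 0)]
      · exact absurd h hQv
  · rintro (⟨hx, hx0⟩ | rfl)
    · obtain ⟨v, hv, hev⟩ := (aux_mem_spec_iff _ _).mp hx
      have hPv : P *ᵥ v = v := by
        have h1 : P *ᵥ (A *ᵥ v) = P *ᵥ (x • v) := by rw [hev]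
        rw [Matrix.mulVec_mulVec, hPA, hev, Matrix.mulVec_smul] at h1
        exact (smul_right_injective (Fin n → ℝ) hx0 h1).symm
      have hQv : Q *ᵥ v = 0 := by
        rw [hQ, Matrix.sub_mulVec, Matrix.one_mulVec, hPv, sub_self]
      refine (aux_mem_spec_iff _ _).mpr ⟨v, hv, ?_⟩
      rw [Matrix.add_mulVec, Matrix.smul_mulVec, hQv, smul_zero, add_zero, hev]
    · -- t is an eigenvalue with eigenvector in range Q
      have hQ0 : Q ≠ 0 := by
        intro h
        apply hPne
        rw [hQ, sub_eq_zero] at h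
        exact h.symm
      obtain ⟨u, hu⟩ : ∃ u : Fin n → ℝ, Q *ᵥ u ≠ 0 := by
        by_contra h
        push_neg at h
        apply hQ0
        ext i j
        have := h (Pi.single j 1)
        rw [Matrix.mulVec_single] at this
        have := congrFun this i
        simpa using this
      refine (aux_mem_spec_iff _ _).mpr ⟨Q *ᵥ u, hu, ?_⟩
      rw [Matrix.add_mulVec, Matrix.mulVec_mulVec, hAQ, Matrix.smul_mulVec,
        Matrix.mulVec_mulVec, hQQ]
      simp

end Aux

/-- If the virtual mass `μ` lies between the smallest nonzero eigenvalue and the largest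
eigenvalue of `PMP`, then the condition number of `M̄(μ) = PMP + μ(I - P)` is minimal:
for every other `μ' > 0`, `cond M̄(μ) ≤ cond M̄(μ')`, stated in product form. -/
theorem stmt_6 (n : ℕ)
    (P M : Matrix (Fin n) (Fin n) ℝ)
    (hPsymm : Pᵀ = P) (hPidem : P * P = P) (hP0 : P ≠ 0) (hPne : P ≠ 1)
    (hM : M.PosDef) (μ : ℝ) (hμ : 0 < μ)
    (ha : sInf (spectrum ℝ (P * M * P) \ {0}) ≤ μ)
    (hb : μ ≤ sSup (spectrum ℝ (P * M * P))) :
    ∀ μ' : ℝ, 0 < μ' →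
      sSup (spectrum ℝ (P * M * P + μ • ((1 : Matrix (Fin n) (Fin n) ℝ) - P))) *
        sInf (spectrum ℝ (P * M * P + μ' • ((1 : Matrix (Fin n) (Fin n) ℝ) - P))) ≤
      sSup (spectrum ℝ (P * M * P + μ' • ((1 : Matrix (Fin n) (Fin n) ℝ) - P))) *
        sInf (spectrum ℝ (P * M * P + μ • ((1 : Matrix (Fin n) (Fin n) ℝ) - P))) := by
  intro μ' hμ'
  have hn : 0 < n := by
    rcases Nat.eq_zero_or_pos n with h | h
    · exfalso; apply hP0; subst h; ext i; exact absurd i.2 (Nat.not_lt_zero _)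
    · exact h
  haveI : Nonempty (Fin n) := ⟨⟨0, hn⟩⟩
  set A := P * M * P with hA
  have hAherm : A.IsHermitian := by
    rw [Matrix.IsHermitian, Matrix.conjTranspose_eq_transpose_of_trivial, hA,
      Matrix.transpose_mul, Matrix.transpose_mul, hPsymm,
      show Mᵀ = M from by
        have := hM.1
        rwa [Matrix.IsHermitian, Matrix.conjTranspose_eq_transpose_of_trivial] at this]
    noncomm_ring
  have hfin : (spectrum ℝ A).Finite := A.finite_real_spectrum
  have hne : (spectrum ℝ A).Nonempty := by
    rw [Matrix.IsHermitian.spectrum_real_eq_range_eigenvalues hAherm]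
    exact Set.range_nonempty _
  set T := spectrum ℝ A \ {0} with hT
  have hTfin : T.Finite := hfin.subset Set.diff_subset
  -- b := sSup (spectrum ℝ A)
  have hbmem : sSup (spectrum ℝ A) ∈ spectrum ℝ A := hne.csSup_mem hfin
  have hbpos : 0 < sSup (spectrum ℝ A) := lt_of_lt_of_le hμ hb
  have hbT : sSup (spectrum ℝ A) ∈ T := ⟨hbmem, fun h => by
    rw [Set.mem_singleton_iff] at h; exact absurd h (ne_of_gt hbpos)⟩
  have hTne : T.Nonempty := ⟨_, hbT⟩
  have hTbddA : BddAbove T := hTfin.bddAbove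
  have hTbddB : BddBelow T := hTfin.bddBelow
  -- sSup T = sSup (spectrum ℝ A)
  have hsupT : sSup T = sSup (spectrum ℝ A) := by
    apply le_antisymm
    · exact csSup_le_csSup hfin.bddAbove hTne Set.diff_subset
    · exact le_csSup hTbddA hbT
  -- a := sInf T
  have hamem : sInf T ∈ T := hTne.csInf_mem hTfin
  have hapos : 0 < sInf T := aux_spec_pos P M hPsymm hPidem hM hamem
  -- spectra of the shifted matrices
  have hspec : ∀ t : ℝ, 0 < t →
      spectrum ℝ (A + t • ((1 : Matrix (Fin n) (Fin n) ℝ) - P)) = T ∪ {t} :=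
    fun t ht => aux_spec_eq P M hPsymm hPidem hPne hM ht
  have hsup : ∀ t : ℝ, 0 < t →
      sSup (spectrum ℝ (A + t • ((1 : Matrix (Fin n) (Fin n) ℝ) - P)))
        = sSup T ⊔ t := by
    intro t ht
    rw [hspec t ht, csSup_union hTbddA hTne bddAbove_singleton (Set.singleton_nonempty t),
      csSup_singleton]
  have hinf : ∀ t : ℝ, 0 < t →
      sInf (spectrum ℝ (A + t • ((1 : Matrix (Fin n) (Fin n) ℝ) - P)))
        = sInf T ⊓ t := by
    intro t ht
    rw [hspec t ht, csInf_union hTbddB hTne bddBelow_singleton (Set.singleton_nonempty t),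
      csInf_singleton]
  rw [hsup μ hμ, hsup μ' hμ', hinf μ hμ, hinf μ' hμ']
  have h1 : sSup T ⊔ μ = sSup T := sup_eq_left.mpr (hsupT ▸ hb)
  have h2 : sInf T ⊓ μ = sInf T := inf_eq_left.mpr ha
  rw [h1, h2]
  exact mul_le_mul le_sup_left inf_le_left (le_inf hapos.le hμ'.le)
    (le_trans (hsupT ▸ hbpos).le le_sup_left)
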